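/- arXiv:1910.00792 — 4 statements merged into one kernel-verified Lean document; each statement's English description precedes it below -/
import Mathlib

section
/- Let (X, d, μ) be a probability space with a measure-preserving flow Φ_t, and let g₁, g₂ be bounded measurable mean-zero functions. Then lim_{T→∞} (1/T) ∫_X (∫_0^T g₁(Φ_s x) ds)(∫_0^T g₂(Φ_s x) ds) dμ(x) = lim_{T→∞} ∫_X g₁(x) (∫_{-T/2}^{T/2} g₂(Φ_s x) ds) dμ(x), provided both limits exist. -/
open MeasureTheory Filter

lemma aux_integrable {α : Type*} [MeasurableSpace α] {ν : Measure α} [IsFiniteMeasure ν]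
    {f : α → ℝ} (hf : AEStronglyMeasurable f ν) {D : ℝ} (hD : ∀ x, |f x| ≤ D) :
    Integrable f ν :=
  (integrable_const D).mono' hf (ae_of_all _ fun x => by simpa [Real.norm_eq_abs] using hD x)

lemma aux_intervalIntegrable {f : ℝ → ℝ} (hf : Measurable f) {D : ℝ} (hD : ∀ x, |f x| ≤ D)
    (a b : ℝ) : IntervalIntegrable f volume a b := by
  have h : ∀ u v : ℝ, IntegrableOn f (Set.Ioc u v) volume := by
    intro u v
    haveI : Fact (volume (Set.Ioc u v) < ⊤) := ⟨measure_Ioc_lt_top⟩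
    exact aux_integrable hf.aestronglyMeasurable.restrict hD
  exact ⟨h a b, h b a⟩

lemma cesaro_cont {R : ℝ → ℝ} (hRc : Continuous R) {L : ℝ}
    (hR : Tendsto R atTop (nhds L)) :
    Tendsto (fun T : ℝ => (1 / T) * ∫ s in (0:ℝ)..T, R s) atTop (nhds L) := by
  rw [Metric.tendsto_atTop] at hR ⊢
  intro ε hε
  obtain ⟨M₀, hM⟩ := hR (ε/2) (by linarith)
  set M := max M₀ 0 with hMdef
  have hM' : ∀ t, M ≤ t → |R t - L| ≤ ε/2 := fun t ht =>
    le_of_lt (by simpa [Real.dist_eq] using hM t (le_trans (le_max_left _ _) ht))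
  set A := |∫ s in (0:ℝ)..M, (R s - L)| with hA
  have hA0 : 0 ≤ A := abs_nonneg _
  refine ⟨max (M + 1) (2 * A / ε + 1), fun T hT => ?_⟩
  have hTM : M + 1 ≤ T := le_trans (le_max_left _ _) hT
  have hTA : 2 * A / ε + 1 ≤ T := le_trans (le_max_right _ _) hT
  have hM0 : (0:ℝ) ≤ M := le_max_right _ _
  have hT0 : 0 < T := by linarith
  have hint : ∀ a b : ℝ, IntervalIntegrable (fun s => R s - L) volume a b :=
    fun a b => (hRc.sub continuous_const).intervalIntegrable a b
  have key : (1 / T) * (∫ s in (0:ℝ)..T, R s) - L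
      = (1/T) * ∫ s in (0:ℝ)..T, (R s - L) := by
    rw [intervalIntegral.integral_sub (hRc.intervalIntegrable 0 T) intervalIntegrable_const,
      intervalIntegral.integral_const]
    field_simp
    simp
  have hsplit : (∫ s in (0:ℝ)..T, (R s - L))
      = (∫ s in (0:ℝ)..M, (R s - L)) + ∫ s in M..T, (R s - L) :=
    (intervalIntegral.integral_add_adjacent_intervals (hint 0 M) (hint M T)).symm
  have htail : |∫ s in M..T, (R s - L)| ≤ ε/2 * |T - M| := by
    rw [← Real.norm_eq_abs]
    apply intervalIntegral.norm_integral_le_of_norm_le_const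
    intro x hx
    rw [Set.uIoc_of_le (by linarith)] at hx
    exact (Real.norm_eq_abs _) ▸ hM' x hx.1.le
  rw [Real.dist_eq, key, hsplit]
  have h1 : |(1/T) * ((∫ s in (0:ℝ)..M, (R s - L)) + ∫ s in M..T, (R s - L))|
      ≤ (1/T) * (A + ε/2 * |T - M|) := by
    rw [abs_mul, abs_of_pos (by positivity : (0:ℝ) < 1/T)]
    have h2 : |(∫ s in (0:ℝ)..M, (R s - L)) + ∫ s in M..T, (R s - L)| ≤ A + ε/2 * |T - M| :=
      le_trans (abs_add_le _ _) (add_le_add le_rfl htail)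
    exact mul_le_mul_of_nonneg_left h2 (by positivity)
  refine lt_of_le_of_lt h1 ?_
  rw [abs_of_nonneg (by linarith : (0:ℝ) ≤ T - M)]
  have hAT : 2 * A < ε * T := by
    have h3 : 2 * A / ε < T := by linarith
    rw [div_lt_iff₀ hε] at h3
    nlinarith
  rw [one_div, inv_mul_eq_div, div_lt_iff₀ hT0]
  nlinarith [mul_nonneg hε.le hM0]

/-- For a measure-preserving flow `Φ` on a probability space and bounded
measurable mean-zero `g₁, g₂`, the two formulations of the dynamical covariance agree:
if both limits exist then they are equal. -/
theorem stmt1 {X : Type*} [MeasurableSpace X]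
    (μ : Measure X) [IsProbabilityMeasure μ]
    (Φ : ℝ → X → X)
    (hΦ0 : ∀ x, Φ 0 x = x)
    (hΦadd : ∀ t s x, Φ (t + s) x = Φ t (Φ s x))
    (hΦmeas : Measurable fun p : ℝ × X => Φ p.1 p.2)
    (hΦpres : ∀ t, MeasurePreserving (Φ t) μ μ)
    (g₁ g₂ : X → ℝ) (hg₁ : Measurable g₁) (hg₂ : Measurable g₂)
    (C : ℝ) (hb₁ : ∀ x, |g₁ x| ≤ C) (hb₂ : ∀ x, |g₂ x| ≤ C)
    (hm₁ : ∫ x, g₁ x ∂μ = 0) (hm₂ : ∫ x, g₂ x ∂μ = 0)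
    (L₁ L₂ : ℝ)
    (h₁ : Tendsto (fun T : ℝ =>
        (1 / T) * ∫ x, (∫ s in (0:ℝ)..T, g₁ (Φ s x)) * (∫ s in (0:ℝ)..T, g₂ (Φ s x)) ∂μ)
      atTop (nhds L₁))
    (h₂ : Tendsto (fun T : ℝ =>
        ∫ x, g₁ x * (∫ s in (-T/2)..(T/2), g₂ (Φ s x)) ∂μ) atTop (nhds L₂)) :
    L₁ = L₂ := by
  -- Basic setup
  have hX : Nonempty X := by
    by_contra h
    rw [not_nonempty_iff] at h
    have h1 : μ Set.univ = 1 := measure_univ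
    rw [Set.univ_eq_empty_iff.mpr h, measure_empty] at h1
    exact zero_ne_one h1
  obtain ⟨x₀⟩ := hX
  have hC0 : 0 ≤ C := le_trans (abs_nonneg _) (hb₁ x₀)
  have hΦsm : ∀ s, Measurable (Φ s) := fun s => hΦmeas.comp measurable_prodMk_left
  have hcomp : ∀ (s : ℝ) (f : X → ℝ), Measurable f →
      ∫ x, f (Φ s x) ∂μ = ∫ x, f x ∂μ := by
    intro s f hf
    calc ∫ x, f (Φ s x) ∂μ = ∫ y, f y ∂(Measure.map (Φ s) μ) :=
          (integral_map (hΦsm s).aemeasurable hf.aestronglyMeasurable).symm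
      _ = ∫ y, f y ∂μ := by rw [(hΦpres s).map_eq]
  -- The correlation function ρ
  set ρ : ℝ → ℝ := fun t => ∫ x, g₁ x * g₂ (Φ t x) ∂μ with hρdef
  have hρmeas : Measurable ρ := by
    have h : StronglyMeasurable fun p : ℝ × X => g₁ p.2 * g₂ (Φ p.1 p.2) :=
      ((hg₁.comp measurable_snd).mul (hg₂.comp hΦmeas)).stronglyMeasurable
    exact h.integral_prod_right'.measurable
  have hbd : ∀ (t : ℝ) (x : X), |g₁ x * g₂ (Φ t x)| ≤ C * C := fun t x => by
    rw [abs_mul]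
    exact mul_le_mul (hb₁ x) (hb₂ _) (abs_nonneg _) hC0
  have hρbd : ∀ t, |ρ t| ≤ C * C := by
    intro t
    rw [← Real.norm_eq_abs]
    calc ‖∫ x, g₁ x * g₂ (Φ t x) ∂μ‖ ≤ C * C * (μ Set.univ).toReal :=
          norm_integral_le_of_norm_le_const (ae_of_all _ fun x => by
            rw [Real.norm_eq_abs]; exact hbd t x)
      _ = C * C := by simp
  have hkey : ∀ s u : ℝ, ∫ x, g₁ (Φ s x) * g₂ (Φ u x) ∂μ = ρ (u - s) := by
    intro s u
    have h1 : ∀ x, g₂ (Φ u x) = g₂ (Φ (u - s) (Φ s x)) := fun x => by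
      rw [← hΦadd, sub_add_cancel]
    calc ∫ x, g₁ (Φ s x) * g₂ (Φ u x) ∂μ
        = ∫ x, (fun y => g₁ y * g₂ (Φ (u - s) y)) (Φ s x) ∂μ := by
          simp only [h1]
      _ = ρ (u - s) := hcomp s _ (hg₁.mul (hg₂.comp (hΦsm _)))
  -- interval integrability of ρ and its primitive
  have hρint : ∀ a b : ℝ, IntervalIntegrable ρ volume a b :=
    fun a b => aux_intervalIntegrable hρmeas hρbd a b
  set P : ℝ → ℝ := fun t => ∫ r in (0:ℝ)..t, ρ r with hPdef
  have hPc : Continuous P := intervalIntegral.continuous_primitive hρint 0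
  have hPab : ∀ a b : ℝ, ∫ r in a..b, ρ r = P b - P a := by
    intro a b
    exact (intervalIntegral.integral_interval_sub_left (hρint 0 b) (hρint 0 a)).symm
  set R : ℝ → ℝ := fun t => P t - P (-t) with hRdef
  have hRc : Continuous R := hPc.sub (hPc.comp continuous_neg)
  -- Formula for the second expression
  have hG : ∀ T : ℝ, 0 ≤ T →
      ∫ x, g₁ x * (∫ s in (-T/2)..(T/2), g₂ (Φ s x)) ∂μ = R (T/2) := by
    intro T hT
    have hle : (-T/2 : ℝ) ≤ T/2 := by linarith
    haveI : Fact (volume (Set.Ioc (-T/2 : ℝ) (T/2)) < ⊤) := ⟨measure_Ioc_lt_top⟩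
    have hum : Measurable (Function.uncurry fun (x : X) (s : ℝ) => g₁ x * g₂ (Φ s x)) :=
      (hg₁.comp measurable_fst).mul
        (hg₂.comp (hΦmeas.comp (measurable_snd.prodMk measurable_fst)))
    have hint : Integrable (Function.uncurry fun (x : X) (s : ℝ) => g₁ x * g₂ (Φ s x))
        (μ.prod (volume.restrict (Set.Ioc (-T/2 : ℝ) (T/2)))) :=
      aux_integrable hum.aestronglyMeasurable (fun p => hbd p.2 p.1)
    calc ∫ x, g₁ x * (∫ s in (-T/2)..(T/2), g₂ (Φ s x)) ∂μ
        = ∫ x, ∫ s in Set.Ioc (-T/2 : ℝ) (T/2), g₁ x * g₂ (Φ s x) ∂volume ∂μ := by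
          congr 1; funext x
          rw [intervalIntegral.integral_of_le hle]
          exact (integral_const_mul _ _).symm
      _ = ∫ s in Set.Ioc (-T/2 : ℝ) (T/2), ∫ x, g₁ x * g₂ (Φ s x) ∂μ ∂volume :=
          integral_integral_swap hint
      _ = ∫ s in (-T/2)..(T/2), ρ s := (intervalIntegral.integral_of_le hle).symm
      _ = P (T/2) - P (-T/2) := hPab _ _
      _ = R (T/2) := by rw [hRdef]; ring_nf
  -- Formula for the first expression
  have hF : ∀ T : ℝ, 0 ≤ T →
      ∫ x, (∫ s in (0:ℝ)..T, g₁ (Φ s x)) * (∫ s in (0:ℝ)..T, g₂ (Φ s x)) ∂μ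
        = ∫ s in (0:ℝ)..T, ∫ u in (0:ℝ)..T, ρ (u - s) := by
    intro T hT
    haveI : Fact (volume (Set.Ioc (0:ℝ) T) < ⊤) := ⟨measure_Ioc_lt_top⟩
    have hm1 : Measurable (Function.uncurry fun (x : X) (p : ℝ × ℝ) =>
        g₁ (Φ p.1 x) * g₂ (Φ p.2 x)) :=
      (hg₁.comp (hΦmeas.comp (measurable_snd.fst.prodMk measurable_fst))).mul
        (hg₂.comp (hΦmeas.comp (measurable_snd.snd.prodMk measurable_fst)))
    have hint1 : Integrable (Function.uncurry fun (x : X) (p : ℝ × ℝ) =>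
        g₁ (Φ p.1 x) * g₂ (Φ p.2 x))
        (μ.prod ((volume.restrict (Set.Ioc (0:ℝ) T)).prod
          (volume.restrict (Set.Ioc (0:ℝ) T)))) :=
      aux_integrable hm1.aestronglyMeasurable (fun q => by
        show |g₁ (Φ q.2.1 q.1) * g₂ (Φ q.2.2 q.1)| ≤ C * C
        rw [abs_mul]; exact mul_le_mul (hb₁ _) (hb₂ _) (abs_nonneg _) hC0)
    have hint2 : Integrable (fun p : ℝ × ℝ => ρ (p.2 - p.1))
        ((volume.restrict (Set.Ioc (0:ℝ) T)).prod (volume.restrict (Set.Ioc (0:ℝ) T))) :=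
      aux_integrable (hρmeas.comp (measurable_snd.sub measurable_fst)).aestronglyMeasurable
        (fun p => hρbd _)
    calc ∫ x, (∫ s in (0:ℝ)..T, g₁ (Φ s x)) * (∫ s in (0:ℝ)..T, g₂ (Φ s x)) ∂μ
        = ∫ x, ∫ p : ℝ × ℝ, g₁ (Φ p.1 x) * g₂ (Φ p.2 x)
            ∂((volume.restrict (Set.Ioc (0:ℝ) T)).prod (volume.restrict (Set.Ioc (0:ℝ) T)))
            ∂μ := by
          congr 1; funext x
          rw [intervalIntegral.integral_of_le hT, intervalIntegral.integral_of_le hT]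
          exact (integral_prod_mul (fun s => g₁ (Φ s x)) (fun u => g₂ (Φ u x))).symm
      _ = ∫ p : ℝ × ℝ, ∫ x, g₁ (Φ p.1 x) * g₂ (Φ p.2 x) ∂μ
            ∂((volume.restrict (Set.Ioc (0:ℝ) T)).prod (volume.restrict (Set.Ioc (0:ℝ) T))) :=
          integral_integral_swap hint1
      _ = ∫ p : ℝ × ℝ, ρ (p.2 - p.1)
            ∂((volume.restrict (Set.Ioc (0:ℝ) T)).prod (volume.restrict (Set.Ioc (0:ℝ) T))) := by
          congr 1; funext p; exact hkey p.1 p.2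
      _ = ∫ s in Set.Ioc (0:ℝ) T, ∫ u in Set.Ioc (0:ℝ) T, ρ (u - s) ∂volume ∂volume :=
          integral_prod _ hint2
      _ = ∫ s in (0:ℝ)..T, ∫ u in (0:ℝ)..T, ρ (u - s) := by
          rw [← intervalIntegral.integral_of_le hT]
          congr 1; funext s
          rw [← intervalIntegral.integral_of_le hT]
  -- The double integral equals ∫₀ᵀ R
  have hKR : ∀ T : ℝ, 0 ≤ T →
      (∫ s in (0:ℝ)..T, ∫ u in (0:ℝ)..T, ρ (u - s)) = ∫ t in (0:ℝ)..T, R t := by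
    intro T hT
    have hinner : ∀ s : ℝ, (∫ u in (0:ℝ)..T, ρ (u - s)) = P (T - s) - P (-s) := by
      intro s
      rw [intervalIntegral.integral_comp_sub_right (fun r => ρ r) s, hPab]
      ring_nf
    have hc1 : Continuous fun s : ℝ => P (T - s) :=
      hPc.comp (continuous_const.sub continuous_id)
    have hc2 : Continuous fun s : ℝ => P (-s) := hPc.comp continuous_neg
    calc (∫ s in (0:ℝ)..T, ∫ u in (0:ℝ)..T, ρ (u - s))
        = ∫ s in (0:ℝ)..T, (P (T - s) - P (-s)) := by
          simp only [hinner]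
      _ = (∫ s in (0:ℝ)..T, P (T - s)) - ∫ s in (0:ℝ)..T, P (-s) :=
          intervalIntegral.integral_sub (hc1.intervalIntegrable 0 T)
            (hc2.intervalIntegrable 0 T)
      _ = (∫ s in (0:ℝ)..T, P s) - ∫ s in (0:ℝ)..T, P (-s) := by
          rw [intervalIntegral.integral_comp_sub_left (fun r => P r) T]
          norm_num
      _ = ∫ t in (0:ℝ)..T, R t := by
          rw [← intervalIntegral.integral_sub (hPc.intervalIntegrable 0 T)
            (hc2.intervalIntegrable 0 T)]
  -- Limits
  have hR2 : Tendsto (fun T : ℝ => R (T/2)) atTop (nhds L₂) := by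
    apply h₂.congr'
    filter_upwards [eventually_ge_atTop (0:ℝ)] with T hT
    exact hG T hT
  have hRlim : Tendsto R atTop (nhds L₂) := by
    have h2T : Tendsto (fun t : ℝ => 2 * t) atTop atTop :=
      Tendsto.const_mul_atTop two_pos tendsto_id
    have := hR2.comp h2T
    refine this.congr fun t => ?_
    simp [Function.comp]
  have hces : Tendsto (fun T : ℝ => (1 / T) * ∫ t in (0:ℝ)..T, R t) atTop (nhds L₂) :=
    cesaro_cont hRc hRlim
  have h₁' : Tendsto (fun T : ℝ => (1 / T) * ∫ t in (0:ℝ)..T, R t) atTop (nhds L₁) := by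
    apply h₁.congr'
    filter_upwards [eventually_ge_atTop (0:ℝ)] with T hT
    rw [hF T hT, hKR T hT]
  exact tendsto_nhds_unique h₁' hces
end

section
/- Let q: ℝ → ℂ be a bounded continuous function periodic with period L > 0. Then for every positive integer k, ∫_0^{kL} (e^{-2s}/(e^{-2kL} - 1) - e^{2s}/(e^{2kL} - 1)) · Re q(s) ds = ∫_0^L (e^{-2s}/(e^{-2L} - 1) - e^{2s}/(e^{2L} - 1)) · Re q(s) ds. -/
/-- For a bounded continuous `L`-periodic `q : ℝ → ℂ` and every positive
integer `k`, the winding-`k` Green's kernel integral over `[0, kL]` equals the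
winding-`1` integral over `[0, L]`. -/
theorem stmt5 (L : ℝ) (hL : 0 < L) (q : ℝ → ℂ) (hq : Continuous q)
    (M : ℝ) (hqb : ∀ s, ‖q s‖ ≤ M) (hper : Function.Periodic q L)
    (k : ℕ) (hk : 1 ≤ k) :
    (∫ s in (0:ℝ)..((k : ℝ) * L),
        (Real.exp (-2 * s) / (Real.exp (-2 * ((k : ℝ) * L)) - 1)
          - Real.exp (2 * s) / (Real.exp (2 * ((k : ℝ) * L)) - 1)) * (q s).re)
      = ∫ s in (0:ℝ)..L,
        (Real.exp (-2 * s) / (Real.exp (-2 * L) - 1)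
          - Real.exp (2 * s) / (Real.exp (2 * L) - 1)) * (q s).re := by
  have hk0 : k ≠ 0 := by omega
  set a := Real.exp (-2 * L) with ha
  set b := Real.exp (2 * L) with hb
  have ha0 : 0 < a := Real.exp_pos _
  have hb0 : 0 < b := Real.exp_pos _
  have ha1 : a < 1 := by
    rw [ha, show (1:ℝ) = Real.exp 0 by simp]
    exact Real.exp_lt_exp.mpr (by nlinarith)
  have hb1 : 1 < b := by
    rw [hb, show (1:ℝ) = Real.exp 0 by simp]
    exact Real.exp_lt_exp.mpr (by nlinarith)
  have eA : Real.exp (-2 * ((k : ℝ) * L)) = a ^ k := by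
    rw [ha, show (-2 * ((k : ℝ) * L)) = (k : ℝ) * (-2 * L) by ring, Real.exp_nat_mul]
  have eB : Real.exp (2 * ((k : ℝ) * L)) = b ^ k := by
    rw [hb, show (2 * ((k : ℝ) * L)) = (k : ℝ) * (2 * L) by ring, Real.exp_nat_mul]
  have hak1 : a ^ k < 1 := pow_lt_one₀ ha0.le ha1 hk0
  have hbk1 : 1 < b ^ k := one_lt_pow₀ hb1 hk0
  have hDa : a ^ k - 1 ≠ 0 := sub_ne_zero.mpr (ne_of_lt hak1)
  have hDb : b ^ k - 1 ≠ 0 := sub_ne_zero.mpr (ne_of_gt hbk1)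
  have hda : a - 1 ≠ 0 := sub_ne_zero.mpr (ne_of_lt ha1)
  have hdb : b - 1 ≠ 0 := sub_ne_zero.mpr (ne_of_gt hb1)
  have hr : Continuous fun s : ℝ => (q s).re := Complex.continuous_re.comp hq
  have hcm : ∀ c : ℝ, Continuous fun t : ℝ => Real.exp (c * t) * (q t).re := fun c =>
    (Real.continuous_exp.comp (continuous_const.mul continuous_id)).mul hr
  -- linear combination lemma
  have key : ∀ c d u v : ℝ,
      (∫ s in u..v, (c * Real.exp (-2 * s) - d * Real.exp (2 * s)) * (q s).re)
        = c * (∫ s in u..v, Real.exp (-2 * s) * (q s).re)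
          - d * (∫ s in u..v, Real.exp (2 * s) * (q s).re) := by
    intro c d u v
    rw [← intervalIntegral.integral_const_mul, ← intervalIntegral.integral_const_mul,
      ← intervalIntegral.integral_sub (f := fun x => c * (Real.exp (-2 * x) * (q x).re))
        (g := fun x => d * (Real.exp (2 * x) * (q x).re))
        ((continuous_const.mul (hcm (-2))).intervalIntegrable u v)
        ((continuous_const.mul (hcm 2)).intervalIntegrable u v)]
    congr 1
    funext s
    ring
  set Im := ∫ t in (0:ℝ)..L, Real.exp (-2 * t) * (q t).re with hIm
  set Ip := ∫ t in (0:ℝ)..L, Real.exp (2 * t) * (q t).re with hIp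
  have hFc : Continuous fun s : ℝ =>
      (Real.exp (-2 * s) / (a ^ k - 1) - Real.exp (2 * s) / (b ^ k - 1)) * (q s).re := by
    apply Continuous.mul _ hr
    exact ((Real.continuous_exp.comp (continuous_const.mul continuous_id)).div_const _).sub
      ((Real.continuous_exp.comp (continuous_const.mul continuous_id)).div_const _)
  -- one block
  have step : ∀ j : ℕ,
      (∫ s in ((j : ℝ) * L)..((j : ℝ) * L + L),
          (Real.exp (-2 * s) / (a ^ k - 1) - Real.exp (2 * s) / (b ^ k - 1)) * (q s).re)
        = a ^ j / (a ^ k - 1) * Im - b ^ j / (b ^ k - 1) * Ip := by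
    intro j
    have hshift := intervalIntegral.integral_comp_add_right (a := (0:ℝ)) (b := L)
      (fun s => (Real.exp (-2 * s) / (a ^ k - 1) - Real.exp (2 * s) / (b ^ k - 1)) * (q s).re)
      ((j : ℝ) * L)
    rw [zero_add, show L + (j : ℝ) * L = (j : ℝ) * L + L by ring] at hshift
    rw [← hshift]
    have hfun : ∀ t : ℝ,
        (Real.exp (-2 * (t + (j : ℝ) * L)) / (a ^ k - 1)
            - Real.exp (2 * (t + (j : ℝ) * L)) / (b ^ k - 1)) * (q (t + (j : ℝ) * L)).re
          = (a ^ j / (a ^ k - 1) * Real.exp (-2 * t)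
              - b ^ j / (b ^ k - 1) * Real.exp (2 * t)) * (q t).re := by
      intro t
      have hqp : q (t + (j : ℝ) * L) = q t := hper.nat_mul j t
      rw [show -2 * (t + (j : ℝ) * L) = -2 * t + (j : ℝ) * (-2 * L) by ring,
        show 2 * (t + (j : ℝ) * L) = 2 * t + (j : ℝ) * (2 * L) by ring,
        Real.exp_add, Real.exp_add, Real.exp_nat_mul, Real.exp_nat_mul, ← ha, ← hb, hqp]
      ring
    simp only [hfun]
    exact key _ _ 0 L
  -- split the big integral
  have hint : ∀ i : ℕ, i < k → IntervalIntegrable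
      (fun s => (Real.exp (-2 * s) / (a ^ k - 1) - Real.exp (2 * s) / (b ^ k - 1)) * (q s).re)
      MeasureTheory.volume ((fun n : ℕ => (n : ℝ) * L) i) ((fun n : ℕ => (n : ℝ) * L) (i + 1)) :=
    fun i _ => hFc.intervalIntegrable _ _
  have hsplit := intervalIntegral.sum_integral_adjacent_intervals (a := fun n : ℕ => (n : ℝ) * L)
    (f := fun s => (Real.exp (-2 * s) / (a ^ k - 1) - Real.exp (2 * s) / (b ^ k - 1)) * (q s).re)
    hint
  simp only [Nat.cast_zero, zero_mul] at hsplit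
  rw [eA, eB, ← hsplit]
  have hsum : ∀ j ∈ Finset.range k,
      (∫ s in ((j : ℝ) * L)..(((j : ℕ) + 1 : ℕ) : ℝ) * L,
          (Real.exp (-2 * s) / (a ^ k - 1) - Real.exp (2 * s) / (b ^ k - 1)) * (q s).re)
        = a ^ j / (a ^ k - 1) * Im - b ^ j / (b ^ k - 1) * Ip := by
    intro j _
    rw [show (((j : ℕ) + 1 : ℕ) : ℝ) * L = (j : ℝ) * L + L by push_cast; ring]
    exact step j
  rw [Finset.sum_congr rfl hsum]
  -- RHS
  have hrhs : (∫ s in (0:ℝ)..L,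
      (Real.exp (-2 * s) / (a - 1) - Real.exp (2 * s) / (b - 1)) * (q s).re)
      = 1 / (a - 1) * Im - 1 / (b - 1) * Ip := by
    have : ∀ s : ℝ, (Real.exp (-2 * s) / (a - 1) - Real.exp (2 * s) / (b - 1)) * (q s).re
        = (1 / (a - 1) * Real.exp (-2 * s) - 1 / (b - 1) * Real.exp (2 * s)) * (q s).re := by
      intro s; ring
    simp only [this]
    exact key _ _ 0 L
  rw [hrhs, Finset.sum_sub_distrib, ← Finset.sum_mul, ← Finset.sum_mul,
    ← Finset.sum_div, ← Finset.sum_div, geom_sum_eq (ne_of_lt ha1) k,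
    geom_sum_eq (ne_of_gt hb1) k]
  field_simp
end

section
/- Let q: ℝ → ℂ be a bounded continuous L-periodic function with |Re q| ≤ M. Define for each positive integer k the quantity ψ_k = ∫_{-kL/2}^{kL/2} K_k(s) Re q(s) ds, where K_k(s) = e^{-2s}/(e^{-2kL}-1) - e^{2s}/(e^{2kL}-1) for 0 ≤ s ≤ kL/2 and the mirrored kernel for negative s. Then as k → ∞, ψ_k converges to -∫_0^∞ e^{-2s} Re q(s) ds - ∫_{-∞}^0 e^{2s} Re q(s) ds, and in fact ψ_k is constant in k, so ψ_1 equals this infinite integral. -/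
open MeasureTheory Filter

/-- The winding-`k` symmetric kernel integral `ψ_k` around a closed geodesic of
length `L`: the kernel is `e^{-2|s|}/(e^{-2kL}-1) - e^{2|s|}/(e^{2kL}-1)` on
`[-kL/2, kL/2]` (which agrees with the stated kernel for `s ≥ 0` and its mirror
for `s < 0`). -/
noncomputable def psiK (L : ℝ) (q : ℝ → ℂ) (k : ℕ) : ℝ :=
  ∫ s in (-((k : ℝ) * L) / 2)..((k : ℝ) * L / 2),
    (Real.exp (-2 * |s|) / (Real.exp (-2 * ((k : ℝ) * L)) - 1)
      - Real.exp (2 * |s|) / (Real.exp (2 * ((k : ℝ) * L)) - 1)) * (q s).re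

section Aux

open Set intervalIntegral

private lemma expInt (a : ℝ) {r : ℝ → ℝ} (hr : Continuous r) {M : ℝ}
    (hb : ∀ s, |r s| ≤ M) :
    IntegrableOn (fun s => Real.exp (-2 * s) * r s) (Ioi a) := by
  have hg : IntegrableOn (fun s => M * Real.exp (-2 * s)) (Ioi a) :=
    (exp_neg_integrableOn_Ioi a (by norm_num : (0:ℝ) < 2)).const_mul M
  refine hg.mono' ?_ ?_
  · exact ((Real.continuous_exp.comp (by continuity)).mul hr).aestronglyMeasurable
  · filter_upwards with s
    rw [Real.norm_eq_abs, abs_mul, abs_of_pos (Real.exp_pos _)]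
    have := hb s
    nlinarith [Real.exp_pos (-2 * s)]

/-- Improper integral of `e^{-2s} r(s)` over `(0,∞)` for `T`-periodic bounded `r`. -/
private lemma periodic_exp_integral (T : ℝ) (hT : 0 < T) (r : ℝ → ℝ)
    (hr : Continuous r) (M : ℝ) (hb : ∀ s, |r s| ≤ M)
    (hp : Function.Periodic r T) :
    ∫ s in Set.Ioi (0:ℝ), Real.exp (-2 * s) * r s
      = (∫ s in (0:ℝ)..T, Real.exp (-2 * s) * r s) / (1 - Real.exp (-2 * T)) := by
  set f : ℝ → ℝ := fun s => Real.exp (-2 * s) * r s with hf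
  have hint : ∀ a : ℝ, IntegrableOn f (Ioi a) := fun a => expInt a hr hb
  have hsplit : ∫ s in Ioi (0:ℝ), f s = (∫ s in Ioc (0:ℝ) T, f s) + ∫ s in Ioi T, f s := by
    rw [← setIntegral_union (Set.Ioc_disjoint_Ioi le_rfl) measurableSet_Ioi
      ((hint 0).mono_set Set.Ioc_subset_Ioi_self) (hint T),
      Set.Ioc_union_Ioi_eq_Ioi hT.le]
  have hshift : ∫ s in Ioi T, f s = Real.exp (-2 * T) * ∫ s in Ioi (0:ℝ), f s := by
    have h1 : ∫ s in Ioi T, f s = ∫ s, (Ioi T).indicator f s :=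
      (MeasureTheory.integral_indicator measurableSet_Ioi).symm
    have h2 : ∫ s, (Ioi T).indicator f s = ∫ s, (Ioi T).indicator f (s + T) :=
      (integral_add_right_eq_self ((Ioi T).indicator f) T).symm
    have h3 : ∀ s, (Ioi T).indicator f (s + T)
        = (Ioi (0:ℝ)).indicator (fun u => Real.exp (-2 * T) * f u) s := by
      intro s
      simp only [Set.indicator_apply, Set.mem_Ioi, lt_add_iff_pos_left]
      by_cases h : 0 < s
      · simp only [if_pos h, hf]
        rw [hp s, show (-2 * (s + T)) = -2 * s + -2 * T by ring, Real.exp_add]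
        ring
      · simp [h]
    rw [h1, h2]
    simp_rw [h3]
    rw [MeasureTheory.integral_indicator measurableSet_Ioi, MeasureTheory.integral_const_mul]
  have hne : 1 - Real.exp (-2 * T) ≠ 0 := by
    have : Real.exp (-2 * T) < 1 := Real.exp_lt_one_iff.mpr (by nlinarith)
    linarith
  have hIoc : ∫ s in Ioc (0:ℝ) T, f s = ∫ s in (0:ℝ)..T, f s :=
    (intervalIntegral.integral_of_le hT.le).symm
  rw [eq_div_iff hne]
  rw [hIoc] at hsplit
  nlinarith [hsplit, hshift]

private lemma periodic_exp_integral_neg (T : ℝ) (hT : 0 < T) (r : ℝ → ℝ)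
    (hr : Continuous r) (M : ℝ) (hb : ∀ s, |r s| ≤ M)
    (hp : Function.Periodic r T) :
    ∫ s in Set.Iio (0:ℝ), Real.exp (2 * s) * r s
      = (∫ s in (-T)..(0:ℝ), Real.exp (2 * s) * r s) / (1 - Real.exp (-2 * T)) := by
  have h0 : ∫ s in Set.Iio (0:ℝ), Real.exp (2 * s) * r s
      = ∫ s in Set.Ioi (0:ℝ), Real.exp (-2 * s) * r (-s) := by
    have := integral_comp_neg_Ioi (0:ℝ) (fun s => Real.exp (2 * s) * r s)
    simp only [neg_zero] at this
    rw [setIntegral_congr_set Iio_ae_eq_Iic, ← this]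
    congr 1 with s
    rw [show (2 : ℝ) * -s = -2 * s by ring]
  have hp' : Function.Periodic (fun s => r (-s)) T := by
    intro s
    simp only [neg_add]
    have := hp.sub_eq (-s)
    rw [show -s - T = -s + -T by ring] at this
    exact this
  rw [h0, periodic_exp_integral T hT (fun s => r (-s)) (by fun_prop) M (fun s => hb (-s)) hp']
  congr 1
  have := intervalIntegral.integral_comp_neg (a := (0:ℝ)) (b := T)
    (fun s => Real.exp (2 * s) * r s)
  simp only [neg_zero] at this
  rw [← this]
  congr 1 with s
  rw [show (2 : ℝ) * -s = -2 * s by ring]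

private lemma psiK_val (L : ℝ) (hL : 0 < L) (q : ℝ → ℂ) (hq : Continuous q)
    (hper : Function.Periodic q L) (k : ℕ) (hk : 1 ≤ k) :
    psiK L q k = -(((∫ s in (0:ℝ)..((k : ℝ) * L), Real.exp (-2 * s) * (q s).re)
      + ∫ s in (-((k : ℝ) * L))..(0:ℝ), Real.exp (2 * s) * (q s).re)
        / (1 - Real.exp (-2 * ((k : ℝ) * L)))) := by
  set r : ℝ → ℝ := fun s => (q s).re with hrdef
  have hrc : Continuous r := Complex.continuous_re.comp hq
  set K : ℝ := (k : ℝ) * L with hKdef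
  have hK : 0 < K := by
    have : (1:ℝ) ≤ (k:ℝ) := by exact_mod_cast hk
    nlinarith
  have hrp : Function.Periodic r K := fun s => congrArg Complex.re (hper.nat_mul k s)
  -- continuity of all integrands
  have hcont : ∀ c : ℝ, Continuous fun s => Real.exp (c * s) * r s := fun c =>
    (Real.continuous_exp.comp (continuous_const.mul continuous_id)).mul hrc
  set x : ℝ := Real.exp (-2 * K) with hxdef
  have hx0 : 0 < x := Real.exp_pos _
  have hx1 : x < 1 := Real.exp_lt_one_iff.mpr (by nlinarith)
  have hxinv : Real.exp (2 * K) = x⁻¹ := by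
    rw [hxdef, ← Real.exp_neg]; ring_nf
  set A := ∫ s in (0:ℝ)..(K/2), Real.exp (-2 * s) * r s with hA
  set B := ∫ s in (0:ℝ)..(K/2), Real.exp (2 * s) * r s with hB
  set C := ∫ s in (-(K/2))..(0:ℝ), Real.exp (2 * s) * r s with hC
  set D := ∫ s in (-(K/2))..(0:ℝ), Real.exp (-2 * s) * r s with hD
  -- the integrand of psiK
  set F : ℝ → ℝ := fun s =>
    (Real.exp (-2 * |s|) / (Real.exp (-2 * K) - 1)
      - Real.exp (2 * |s|) / (Real.exp (2 * K) - 1)) * r s with hF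
  have hFc : Continuous F := by
    fun_prop
  have hpsi : psiK L q k = (∫ s in (-(K/2))..(0:ℝ), F s) + ∫ s in (0:ℝ)..(K/2), F s := by
    rw [intervalIntegral.integral_add_adjacent_intervals
      (hFc.intervalIntegrable _ _) (hFc.intervalIntegrable _ _)]
    unfold psiK
    rw [show -((k : ℝ) * L) / 2 = -(K/2) by rw [← hKdef]; ring,
      show (k : ℝ) * L / 2 = K/2 by rw [← hKdef]]
  have hpos : ∫ s in (0:ℝ)..(K/2), F s
      = (Real.exp (-2 * K) - 1)⁻¹ * A - (Real.exp (2 * K) - 1)⁻¹ * B := by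
    rw [show (∫ s in (0:ℝ)..(K/2), F s)
        = ∫ s in (0:ℝ)..(K/2), ((Real.exp (-2 * K) - 1)⁻¹ * (Real.exp (-2 * s) * r s)
          - (Real.exp (2 * K) - 1)⁻¹ * (Real.exp (2 * s) * r s)) from
      intervalIntegral.integral_congr (fun s hs => by
        rw [Set.uIcc_of_le (by positivity)] at hs
        simp only [hF, abs_of_nonneg hs.1]
        field_simp)]
    rw [intervalIntegral.integral_sub
        ((continuous_const.fun_mul (hcont (-2))).intervalIntegrable _ _)
        ((continuous_const.fun_mul (hcont 2)).intervalIntegrable _ _),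
      intervalIntegral.integral_const_mul, intervalIntegral.integral_const_mul]
  have hneg : ∫ s in (-(K/2))..(0:ℝ), F s
      = (Real.exp (-2 * K) - 1)⁻¹ * C - (Real.exp (2 * K) - 1)⁻¹ * D := by
    rw [show (∫ s in (-(K/2))..(0:ℝ), F s)
        = ∫ s in (-(K/2))..(0:ℝ), ((Real.exp (-2 * K) - 1)⁻¹ * (Real.exp (2 * s) * r s)
          - (Real.exp (2 * K) - 1)⁻¹ * (Real.exp (-2 * s) * r s)) from
      intervalIntegral.integral_congr (fun s hs => by
        rw [Set.uIcc_of_le (by simp; positivity)] at hs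
        have habs : |s| = -s := abs_of_nonpos hs.2
        simp only [hF, habs]
        rw [show (-2 : ℝ) * -s = 2 * s by ring, show (2 : ℝ) * -s = -2 * s by ring]
        field_simp)]
    rw [intervalIntegral.integral_sub
        ((continuous_const.fun_mul (hcont 2)).intervalIntegrable _ _)
        ((continuous_const.fun_mul (hcont (-2))).intervalIntegrable _ _),
      intervalIntegral.integral_const_mul, intervalIntegral.integral_const_mul]
  -- substitution identities
  have hBshift : ∫ s in (-K)..(-(K/2)), Real.exp (2 * s) * r s = x * B := by
    have h := intervalIntegral.integral_comp_sub_right (a := (0:ℝ)) (b := K/2)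
      (fun s => Real.exp (2 * s) * r s) K
    rw [show (0:ℝ) - K = -K by ring, show K/2 - K = -(K/2) by ring] at h
    rw [← h]
    rw [show (∫ s in (0:ℝ)..(K/2), Real.exp (2 * (s - K)) * r (s - K))
        = ∫ s in (0:ℝ)..(K/2), x * (Real.exp (2 * s) * r s) from
      intervalIntegral.integral_congr (fun s _ => by
        rw [hrp.sub_eq s, show (2:ℝ) * (s - K) = 2 * s + -2 * K by ring, Real.exp_add,
          ← hxdef]
        ring)]
    rw [intervalIntegral.integral_const_mul, ← hB]
  have hDshift : ∫ s in (K/2)..K, Real.exp (-2 * s) * r s = x * D := by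
    have h := intervalIntegral.integral_comp_add_right (a := -(K/2)) (b := (0:ℝ))
      (fun s => Real.exp (-2 * s) * r s) K
    rw [show -(K/2) + K = K/2 by ring, show (0:ℝ) + K = K by ring] at h
    rw [← h]
    rw [show (∫ s in (-(K/2))..(0:ℝ), Real.exp (-2 * (s + K)) * r (s + K))
        = ∫ s in (-(K/2))..(0:ℝ), x * (Real.exp (-2 * s) * r s) from
      intervalIntegral.integral_congr (fun s _ => by
        rw [hrp s, show (-2:ℝ) * (s + K) = -2 * s + -2 * K by ring, Real.exp_add, ← hxdef]
        ring)]
    rw [intervalIntegral.integral_const_mul, ← hD]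
  have hcplus : ∫ s in (0:ℝ)..K, Real.exp (-2 * s) * r s = A + x * D := by
    rw [← intervalIntegral.integral_add_adjacent_intervals (b := K/2)
      (((hcont (-2))).intervalIntegrable _ _) (((hcont (-2))).intervalIntegrable _ _),
      ← hA, hDshift]
  have hcminus : ∫ s in (-K)..(0:ℝ), Real.exp (2 * s) * r s = x * B + C := by
    rw [← intervalIntegral.integral_add_adjacent_intervals (b := -(K/2))
      (((hcont 2)).intervalIntegrable _ _) (((hcont 2)).intervalIntegrable _ _),
      ← hC, hBshift]
  rw [hpsi, hpos, hneg, hcplus, hcminus, ← hxdef, hxinv]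
  have h1 : x - 1 ≠ 0 := by linarith
  have h2 : x⁻¹ - 1 ≠ 0 := by
    have : (1:ℝ) < x⁻¹ := (one_lt_inv₀ hx0).mpr hx1
    linarith
  have hxne : x ≠ 0 := ne_of_gt hx0
  have h3 : (1:ℝ) - x ≠ 0 := by linarith
  field_simp
  ring

end Aux

/-- For bounded continuous `L`-periodic `q`, the quantities `ψ_k`
converge as `k → ∞` to `-∫₀^∞ e^{-2s} Re q - ∫_{-∞}^0 e^{2s} Re q`; moreover `ψ_k`
is constant in `k ≥ 1`, so `ψ_1` equals this improper integral. -/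
theorem stmt6 (L : ℝ) (hL : 0 < L) (q : ℝ → ℂ) (hq : Continuous q)
    (M : ℝ) (hqb : ∀ s, |(q s).re| ≤ M) (hper : Function.Periodic q L) :
    Tendsto (fun k : ℕ => psiK L q k) atTop
      (nhds (-(∫ s in Set.Ioi (0:ℝ), Real.exp (-2 * s) * (q s).re)
        - ∫ s in Set.Iio (0:ℝ), Real.exp (2 * s) * (q s).re)) ∧
    (∀ k : ℕ, 1 ≤ k → psiK L q k = psiK L q 1) ∧
    psiK L q 1 = -(∫ s in Set.Ioi (0:ℝ), Real.exp (-2 * s) * (q s).re)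
        - ∫ s in Set.Iio (0:ℝ), Real.exp (2 * s) * (q s).re := by
  have hrc : Continuous fun s => (q s).re := Complex.continuous_re.comp hq
  have key : ∀ k : ℕ, 1 ≤ k →
      psiK L q k = -(∫ s in Set.Ioi (0:ℝ), Real.exp (-2 * s) * (q s).re)
        - ∫ s in Set.Iio (0:ℝ), Real.exp (2 * s) * (q s).re := by
    intro k hk
    have hK : 0 < (k : ℝ) * L := by
      have : (1:ℝ) ≤ (k:ℝ) := by exact_mod_cast hk
      nlinarith
    have hrp : Function.Periodic (fun s => (q s).re) ((k : ℝ) * L) :=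
      fun s => congrArg Complex.re (hper.nat_mul k s)
    rw [psiK_val L hL q hq hper k hk,
      periodic_exp_integral ((k : ℝ) * L) hK _ hrc M hqb hrp,
      periodic_exp_integral_neg ((k : ℝ) * L) hK _ hrc M hqb hrp]
    ring
  refine ⟨?_, fun k hk => by rw [key k hk, key 1 le_rfl], key 1 le_rfl⟩
  have heq : (fun _ : ℕ => -(∫ s in Set.Ioi (0:ℝ), Real.exp (-2 * s) * (q s).re)
      - ∫ s in Set.Iio (0:ℝ), Real.exp (2 * s) * (q s).re)
      =ᶠ[atTop] fun k : ℕ => psiK L q k :=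
    eventually_atTop.2 ⟨1, fun k hk => (key k hk).symm⟩
  exact Tendsto.congr' heq tendsto_const_nhds
end

section
/- Suppose (A_n)_{n≥0} and (B_n)_{n≥0} are real sequences satisfying: (1) Σ_{n≥0} (A_n + B_n) T^{2n+3} (1-T²)^6 = -B₀ T³ (1-T²)³ as formal power series (equivalently, for all T in a neighborhood of 0 where the series converge absolutely), and (2) 2^{n+3} B_n + Σ_{k=0}^n (n-k+1)(n-k+2) 2^{k-1} A_k = 0 for all n ≥ 0. Then A_n = B_n = 0 for all n ≥ 0. -/
open Filter Topology

lemma aux_coeff_zero (D : ℕ → ℝ) (y0 : ℝ) (hy0 : 0 < y0)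
    (h : ∀ y : ℝ, 0 < y → y < y0 → HasSum (fun n => D n * y ^ n) 0) :
    ∀ n, D n = 0 := by
  set p : FormalMultilinearSeries ℝ ℝ ℝ := FormalMultilinearSeries.ofScalars ℝ D with hpdef
  have hr : (0:ℝ) < y0 / 2 := by linarith
  have hsum : Summable (fun n => ‖p n‖ * (y0 / 2) ^ n) := by
    have h1 := ((h (y0 / 2) hr (by linarith)).summable).abs
    refine h1.congr fun n => ?_
    rw [abs_mul, abs_pow, abs_of_nonneg hr.le, hpdef,
      FormalMultilinearSeries.ofScalars_norm]
    rfl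
  set r : NNReal := ⟨y0 / 2, hr.le⟩ with hrdef
  have hle : (r : ENNReal) ≤ p.radius := p.le_radius_of_summable_norm hsum
  have hpos : 0 < p.radius := lt_of_lt_of_le (by exact_mod_cast ENNReal.coe_pos.2 (by exact_mod_cast hr)) hle
  have hball := p.hasFPowerSeriesOnBall hpos
  have hsumeq : ∀ y : ℝ, p.sum y = ∑' n, D n * y ^ n := by
    intro y
    refine tsum_congr fun n => ?_
    rw [hpdef, FormalMultilinearSeries.ofScalars_apply_eq, smul_eq_mul]
  have hzero : ∀ᶠ y in 𝓝[>] (0:ℝ), p.sum y = 0 := by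
    filter_upwards [Ioo_mem_nhdsGT_of_mem (by simp [hy0] : (0:ℝ) ∈ Set.Ico (0:ℝ) y0)]
      with y hy
    rw [hsumeq, (h y hy.1 hy.2).tsum_eq]
  have hfreq : ∃ᶠ y in 𝓝[≠] (0:ℝ), p.sum y = 0 :=
    hzero.frequently.filter_mono (nhdsWithin_mono 0 (fun y hy => ne_of_gt hy))
  have heq : p.sum =ᶠ[𝓝 (0:ℝ)] 0 :=
    hball.analyticAt.frequently_zero_iff_eventually_zero.1 hfreq
  have hp0 : p = 0 := hball.hasFPowerSeriesAt.eq_zero_of_eventually heq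
  intro n
  have := congrFun hp0 n
  rwa [hpdef, FormalMultilinearSeries.zero_apply, FormalMultilinearSeries.ofScalars_eq_zero] at this

/-- If real sequences `(Aₙ), (Bₙ)` satisfy (1) the power-series
identity `Σₙ (Aₙ + Bₙ) T^{2n+3}(1-T²)⁶ = -B₀ T³ (1-T²)³` for all `T` in a
neighborhood of `0` (where the series converges), and (2) the relations
`2^{n+3} Bₙ + Σ_{k=0}^n (n-k+1)(n-k+2) 2^{k-1} Aₖ = 0` for all `n ≥ 0`, then
`Aₙ = Bₙ = 0` for all `n`. -/
theorem stmt15 (A B : ℕ → ℝ) (ε : ℝ) (hε : 0 < ε)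
    (h1 : ∀ T : ℝ, |T| < ε →
      HasSum (fun n : ℕ => (A n + B n) * T ^ (2 * n + 3) * (1 - T ^ 2) ^ 6)
        (-(B 0) * T ^ 3 * (1 - T ^ 2) ^ 3))
    (h2 : ∀ n : ℕ, 2 ^ (n + 3) * B n
        + ∑ k ∈ Finset.range (n + 1),
            ((n - k + 1 : ℕ) : ℝ) * ((n - k + 2 : ℕ) : ℝ) * ((2 : ℝ) ^ k / 2) * A k = 0) :
    ∀ n, A n = 0 ∧ B n = 0 := by
  set δ := min ε 1 with hδdef
  have hδ : 0 < δ := lt_min hε one_pos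
  set D : ℕ → ℝ := fun n => (A n + B n) + B 0 * (((n + 2).choose 2 : ℕ) : ℝ) with hDdef
  have hstep : ∀ y : ℝ, 0 < y → y < δ ^ 2 → HasSum (fun n => D n * y ^ n) 0 := by
    intro y hy hyδ
    set T := Real.sqrt y with hTdef
    have hT0 : 0 < T := Real.sqrt_pos.mpr hy
    have hT2 : T ^ 2 = y := Real.sq_sqrt hy.le
    have hTδ : T < δ := by nlinarith
    have hTε : |T| < ε := by
      rw [abs_of_pos hT0]; exact lt_of_lt_of_le hTδ (min_le_left _ _)
    have hT1 : T < 1 := lt_of_lt_of_le hTδ (min_le_right _ _)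
    have hy1 : y < 1 := by nlinarith
    have h1y : (0:ℝ) < 1 - y := by linarith
    have hTne : T ≠ 0 := ne_of_gt hT0
    have h1yne : (1 - y) ≠ 0 := ne_of_gt h1y
    have h1T := (h1 T hTε).div_const (T ^ 3 * (1 - T ^ 2) ^ 6)
    have hfun : (fun n : ℕ => ((A n + B n) * T ^ (2 * n + 3) * (1 - T ^ 2) ^ 6)
        / (T ^ 3 * (1 - T ^ 2) ^ 6)) = fun n : ℕ => (A n + B n) * y ^ n := by
      funext n
      rw [pow_add, pow_mul, hT2]
      field_simp
    have hval : (-(B 0) * T ^ 3 * (1 - T ^ 2) ^ 3) / (T ^ 3 * (1 - T ^ 2) ^ 6)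
        = -(B 0) / (1 - y) ^ 3 := by
      rw [hT2]
      field_simp
    rw [hfun, hval] at h1T
    have hynorm : ‖y‖ < 1 := by rw [Real.norm_eq_abs, abs_of_pos hy]; exact hy1
    have hch := (hasSum_choose_mul_geometric_of_norm_lt_one 2 hynorm).mul_left (B 0)
    have hsum0 := h1T.add hch
    convert hsum0 using 1
    · rfl
    · funext n
      simp only [hDdef]
      ring
    · ring
  have hDzero := aux_coeff_zero D (δ ^ 2) (by positivity) hstep
  have hD0 := hDzero 0
  simp only [hDdef, Nat.choose_self, Nat.cast_one, mul_one, zero_add] at hD0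
  have h20 := h2 0
  simp only [zero_add, Finset.sum_range_one, Nat.sub_zero, Nat.cast_one, Nat.cast_ofNat, pow_zero] at h20
  norm_num at h20 hD0
  have hB0 : B 0 = 0 := by linarith
  have hA0 : A 0 = 0 := by linarith
  have hAB : ∀ n, A n + B n = 0 := by
    intro n
    have := hDzero n
    rw [hDdef] at this
    simp only [hB0, zero_mul, add_zero] at this
    exact this
  have hA : ∀ n, A n = 0 := by
    intro n
    induction n using Nat.strong_induction_on with
    | _ n ih =>
      have h2n := h2 n
      rw [Finset.sum_range_succ] at h2n
      rw [Finset.sum_eq_zero (fun k hk => by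
        rw [ih k (Finset.mem_range.mp hk), mul_zero])] at h2n
      have hBn : B n = -A n := by have := hAB n; linarith
      rw [hBn, Nat.sub_self] at h2n
      norm_num at h2n
      have hx : (2:ℝ) ^ n * A n = 0 := by
        have e : (2:ℝ) ^ (n + 3) = 8 * 2 ^ n := by ring
        rw [e] at h2n
        linarith
      rcases mul_eq_zero.mp hx with h | h
      · exact absurd h (by positivity)
      · exact h
  intro n
  refine ⟨hA n, ?_⟩
  have := hAB n
  have := hA n
  linarith
end
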